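/- A continuous linear automorphism T of a Banach space B has the shadowing property if and only if there exists K > 0 such that for every bounded sequence (z_n)_{n ∈ ℤ} in B there exists a sequence (y_n)_{n ∈ ℤ} with sup_n ‖y_n‖ ≤ K · sup_n ‖z_n‖ and y_{n+1} = T y_n + z_n for all n ∈ ℤ. -/

import Mathlib

/-- A continuous linear automorphism has the shadowing property if every
δ-pseudo-orbit is ε-shadowed by a true orbit. -/
def Shadowing {X : Type*} [SeminormedAddCommGroup X] [Module ℝ X] (T : X ≃L[ℝ] X) : Prop :=
  ∀ ε > (0 : ℝ), ∃ δ > (0 : ℝ), ∀ x : ℤ → X,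
    (∀ n : ℤ, ‖x (n + 1) - T (x n)‖ < δ) →
    ∃ y : X, ∀ n : ℤ, ‖x n - (T ^ n) y‖ < ε

section aux

variable {B : Type*} [NormedAddCommGroup B] [NormedSpace ℝ B]

lemma zpow_succ_apply' (T : B ≃L[ℝ] B) (n : ℤ) (x : B) :
    (T ^ (n + 1)) x = T ((T ^ n) x) := by
  have h : T ^ (n + 1) = T * T ^ n := by
    rw [add_comm, zpow_add, zpow_one]
  rw [h]; rfl

lemma zpow_pred_apply' (T : B ≃L[ℝ] B) (n : ℤ) (x : B) :
    (T ^ (n - 1)) x = T.symm ((T ^ n) x) := by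
  have h : T ^ (n - 1) = T⁻¹ * T ^ n := by
    rw [sub_eq_add_neg, add_comm, zpow_add, zpow_neg, zpow_one]
  rw [h]; rfl

/-- Solve the recurrence `x (n+1) = T (x n) + w n` over `ℤ` with `x 0 = 0`. -/
lemma exists_solution (T : B ≃L[ℝ] B) (w : ℤ → B) :
    ∃ x : ℤ → B, ∀ n : ℤ, x (n + 1) = T (x n) + w n := by
  -- forward part
  let f : ℕ → B := fun k => Nat.rec 0 (fun k fk => T fk + w k) k
  -- backward part
  let g : ℕ → B := fun k => Nat.rec 0 (fun k gk => T.symm (gk - w (-(k + 1)))) k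
  refine ⟨fun n => Int.rec (fun k => f k) (fun k => g (k + 1)) n, ?_⟩
  intro n
  match n with
  | Int.ofNat k =>
      have h : (Int.ofNat k) + 1 = Int.ofNat (k + 1) := rfl
      rw [h]
      show f (k + 1) = T (f k) + w (Int.ofNat k)
      rfl
  | Int.negSucc 0 =>
      have h : (Int.negSucc 0) + 1 = Int.ofNat 0 := rfl
      rw [h]
      show f 0 = T (g 1) + w (Int.negSucc 0)
      show (0 : B) = T (T.symm ((0 : B) - w (-(0 + 1)))) + w (Int.negSucc 0)
      have : ((-(0 + 1) : ℤ)) = Int.negSucc 0 := rfl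
      rw [this, T.apply_symm_apply, zero_sub, neg_add_cancel]
  | Int.negSucc (k + 1) =>
      have h : (Int.negSucc (k + 1)) + 1 = Int.negSucc k := rfl
      rw [h]
      show g (k + 1) = T (g (k + 2)) + w (Int.negSucc (k + 1))
      show g (k + 1) = T (T.symm (g (k + 1) - w (-((k + 1 : ℕ) + 1)))) + w (Int.negSucc (k + 1))
      have : ((-((k + 1 : ℕ) + 1) : ℤ)) = Int.negSucc (k + 1) := by
        simp [Int.negSucc_eq]
      rw [this, T.apply_symm_apply, sub_add_cancel]

end aux

/-- shadowing is equivalent to solving the cohomological equation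
`y_{n+1} = T y_n + z_n` with a uniform bound `sup ‖y_n‖ ≤ K · sup ‖z_n‖`. -/
theorem stmt2 {B : Type*} [NormedAddCommGroup B] [NormedSpace ℝ B] [CompleteSpace B]
    (T : B ≃L[ℝ] B) :
    Shadowing T ↔
      ∃ K > (0 : ℝ), ∀ (z : ℤ → B) (C : ℝ), (∀ n : ℤ, ‖z n‖ ≤ C) →
        ∃ y : ℤ → B, (∀ n : ℤ, ‖y n‖ ≤ K * C) ∧ ∀ n : ℤ, y (n + 1) = T (y n) + z n := by
  constructor
  · -- Shadowing → bounded solutions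
    intro hS
    obtain ⟨δ, hδ, hshad⟩ := hS 1 one_pos
    refine ⟨2 / δ, by positivity, ?_⟩
    intro z C hC
    have hC0 : 0 ≤ C := le_trans (norm_nonneg (z 0)) (hC 0)
    rcases eq_or_lt_of_le hC0 with hC0 | hC0
    · -- C = 0 : z is identically 0, take y = 0
      refine ⟨fun _ => 0, fun n => by simp [← hC0], fun n => ?_⟩
      have hz : z n = 0 := by
        have := hC n; rw [← hC0] at this
        exact norm_le_zero_iff.mp this
      simp [hz]
    · -- C > 0 : rescale
      set c : ℝ := δ / (2 * C) with hc
      have hcpos : 0 < c := by positivity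
      obtain ⟨x, hx⟩ := exists_solution T (fun n => c • z n)
      have hpseudo : ∀ n : ℤ, ‖x (n + 1) - T (x n)‖ < δ := by
        intro n
        rw [hx n]
        simp only [add_sub_cancel_left]
        rw [norm_smul]
        calc ‖c‖ * ‖z n‖ ≤ c * C := by
              rw [Real.norm_of_nonneg hcpos.le]
              exact mul_le_mul_of_nonneg_left (hC n) hcpos.le
          _ = δ / 2 := by rw [hc, div_mul_eq_mul_div, mul_div_mul_right _ _ hC0.ne']
          _ < δ := by linarith
      obtain ⟨p, hp⟩ := hshad x hpseudo
      refine ⟨fun n => c⁻¹ • (x n - (T ^ n) p), fun n => ?_, fun n => ?_⟩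

      · rw [norm_smul, Real.norm_of_nonneg (inv_nonneg.mpr hcpos.le)]
        have h1 : c⁻¹ * ‖x n - (T ^ n) p‖ ≤ c⁻¹ * 1 :=
          mul_le_mul_of_nonneg_left (hp n).le (inv_nonneg.mpr hcpos.le)
        have h2 : c⁻¹ * 1 = 2 / δ * C := by
          rw [mul_one, hc]; field_simp
        linarith
      · show c⁻¹ • (x (n + 1) - (T ^ (n + 1)) p) = T (c⁻¹ • (x n - (T ^ n) p)) + z n
        rw [zpow_succ_apply', hx n]
        rw [show T (x n) + c • z n - T ((T ^ n) p)
            = T (x n - (T ^ n) p) + c • z n by rw [map_sub]; abel]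
        rw [smul_add, map_smul, smul_smul, inv_mul_cancel₀ hcpos.ne', one_smul]
  · -- bounded solutions → Shadowing
    rintro ⟨K, hK, hsol⟩ ε hε
    refine ⟨ε / (2 * K), by positivity, ?_⟩
    intro x hx
    set z : ℤ → B := fun n => x (n + 1) - T (x n) with hz
    obtain ⟨y, hy, hrec⟩ := hsol z (ε / (2 * K)) (fun n => (hx n).le)
    refine ⟨x 0 - y 0, ?_⟩
    have key : ∀ n : ℤ, x n - y n = (T ^ n) (x 0 - y 0) := by
      intro n
      induction n using Int.induction_on with
      | zero => rw [zpow_zero]; rfl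
      | succ n ih =>
          rw [zpow_succ_apply', ← ih, hrec n, hz]
          simp only [map_sub]
          abel
      | pred n ih =>
          rw [show (-(n : ℤ) - 1) = (-(n : ℤ) - 1) from rfl]
          rw [zpow_pred_apply', ← ih]
          have h := hrec (-(n : ℤ) - 1)
          rw [show (-(n : ℤ) - 1 + 1) = -(n : ℤ) by ring] at h
          rw [h, hz]
          simp only [show (-(n : ℤ) - 1 + 1) = -(n : ℤ) by ring]
          rw [show x (-(n:ℤ)) - (T (y (-(n:ℤ) - 1)) + (x (-(n:ℤ)) - T (x (-(n:ℤ) - 1))))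
              = T (x (-(n:ℤ) - 1) - y (-(n:ℤ) - 1)) by rw [map_sub]; abel]
          rw [T.symm_apply_apply]
    intro n
    rw [← key n, show x n - (x n - y n) = y n by abel]
    calc ‖y n‖ ≤ K * (ε / (2 * K)) := hy n
      _ = ε / 2 := by field_simp
      _ < ε := by linarith
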